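/- Let H be symmetric positive definite, L satisfy Lᵀ H + H L = 0, and G = ∑_{k=0}^{s} a_k (hL)^k with a_0 = 1. Suppose b_k = 0 for 1 ≤ k ≤ s-2, b_{s-1} < 0, b_s = a_s² > 0, and h‖L‖ ≤ √(−b_{s-1}/b_s), where ‖L‖ is the H-operator norm. Then ‖G u‖_H ≤ ‖u‖_H for all u. -/

import Mathlib

open Matrix Finset

/-- The `H`-norm of a vector. -/
noncomputable def normH {n : ℕ} (H : Matrix (Fin n) (Fin n) ℝ) (u : Fin n → ℝ) : ℝ :=
  Real.sqrt (u ⬝ᵥ (H *ᵥ u))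

/-- The `H`-operator norm of a matrix: `sup_{‖v‖_H = 1} ‖Lv‖_H`. -/
noncomputable def opNormH {n : ℕ} (H L : Matrix (Fin n) (Fin n) ℝ) : ℝ :=
  sSup {x : ℝ | ∃ v : Fin n → ℝ, normH H v = 1 ∧ x = normH H (L *ᵥ v)}

namespace SSC

variable {n : ℕ}

lemma quad_nonneg {H : Matrix (Fin n) (Fin n) ℝ} (hH : H.PosDef) (x : Fin n → ℝ) :
    0 ≤ x ⬝ᵥ (H *ᵥ x) := by
  have := hH.posSemidef.dotProduct_mulVec_nonneg x
  simpa using this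

lemma quad_pos {H : Matrix (Fin n) (Fin n) ℝ} (hH : H.PosDef) {x : Fin n → ℝ} (hx : x ≠ 0) :
    0 < x ⬝ᵥ (H *ᵥ x) := by
  have := hH.dotProduct_mulVec_pos hx
  simpa using this

lemma quad_smul (H : Matrix (Fin n) (Fin n) ℝ) (t : ℝ) (x : Fin n → ℝ) :
    (t • x) ⬝ᵥ (H *ᵥ (t • x)) = t ^ 2 * (x ⬝ᵥ (H *ᵥ x)) := by
  rw [mulVec_smul, dotProduct_smul, smul_dotProduct]
  simp [smul_smul]
  ring

lemma normH_nonneg (H : Matrix (Fin n) (Fin n) ℝ) (x : Fin n → ℝ) : 0 ≤ normH H x :=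
  Real.sqrt_nonneg _

lemma normH_sq {H : Matrix (Fin n) (Fin n) ℝ} (hH : H.PosDef) (x : Fin n → ℝ) :
    normH H x ^ 2 = x ⬝ᵥ (H *ᵥ x) :=
  Real.sq_sqrt (quad_nonneg hH x)

lemma normH_smul (H : Matrix (Fin n) (Fin n) ℝ) (t : ℝ) (x : Fin n → ℝ) :
    normH H (t • x) = |t| * normH H x := by
  unfold normH
  rw [quad_smul, Real.sqrt_mul (sq_nonneg t), Real.sqrt_sq_eq_abs]

lemma cont_quad (H : Matrix (Fin n) (Fin n) ℝ) :
    Continuous fun v : Fin n → ℝ => v ⬝ᵥ (H *ᵥ v) := by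
  simp only [dotProduct, mulVec]
  refine continuous_finset_sum _ fun i _ => ?_
  exact (continuous_apply i).mul
    (continuous_finset_sum _ fun j _ => continuous_const.mul (continuous_apply j))

lemma cont_quadL (H L : Matrix (Fin n) (Fin n) ℝ) :
    Continuous fun v : Fin n → ℝ => (L *ᵥ v) ⬝ᵥ (H *ᵥ (L *ᵥ v)) := by
  have h1 : Continuous fun v : Fin n → ℝ => L *ᵥ v := L.mulVecLin.continuous_of_finiteDimensional
  exact (cont_quad H).comp h1

lemma opNormH_nonneg (H L : Matrix (Fin n) (Fin n) ℝ) : 0 ≤ opNormH H L :=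
  Real.sSup_nonneg (by rintro x ⟨v, -, rfl⟩; exact Real.sqrt_nonneg _)

/-- lower bound of the quadratic form in terms of euclidean-ish norm -/
lemma bddAbove_set {H : Matrix (Fin n) (Fin n) ℝ} (hH : H.PosDef)
    (L : Matrix (Fin n) (Fin n) ℝ) (hn : 0 < n) :
    BddAbove {x : ℝ | ∃ v : Fin n → ℝ, normH H v = 1 ∧ x = normH H (L *ᵥ v)} := by
  haveI : Nonempty (Fin n) := ⟨⟨0, hn⟩⟩
  have hne : (Metric.sphere (0 : Fin n → ℝ) 1).Nonempty := by
    refine NormedSpace.sphere_nonempty.mpr zero_le_one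
  have hcomp : IsCompact (Metric.sphere (0 : Fin n → ℝ) 1) := isCompact_sphere 0 1
  obtain ⟨vm, hvm, hmin⟩ := hcomp.exists_isMinOn hne (cont_quad H).continuousOn
  obtain ⟨vM, hvM, hmax⟩ := hcomp.exists_isMaxOn hne (cont_quadL H L).continuousOn
  set c := vm ⬝ᵥ (H *ᵥ vm) with hc
  set Cg := (L *ᵥ vM) ⬝ᵥ (H *ᵥ (L *ᵥ vM)) with hCg
  have hvm0 : vm ≠ 0 := by
    intro h0
    have := mem_sphere_zero_iff_norm.mp hvm
    rw [h0] at this; simp at this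
  have hcpos : 0 < c := quad_pos hH hvm0
  have hCg0 : 0 ≤ Cg := quad_nonneg hH _
  -- scaling bounds
  have hlow : ∀ v : Fin n → ℝ, v ≠ 0 → c * ‖v‖ ^ 2 ≤ v ⬝ᵥ (H *ᵥ v) := by
    intro v hv
    have hnv : (0:ℝ) < ‖v‖ := norm_pos_iff.mpr hv
    have hmem : ‖v‖⁻¹ • v ∈ Metric.sphere (0 : Fin n → ℝ) 1 := by
      rw [mem_sphere_zero_iff_norm, norm_smul]
      simp [abs_of_pos (inv_pos.mpr hnv), inv_mul_cancel₀ hnv.ne']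
    have := hmin hmem
    simp only [Set.mem_setOf_eq] at this
    have h2 : (‖v‖⁻¹ • v) ⬝ᵥ (H *ᵥ (‖v‖⁻¹ • v)) = ‖v‖⁻¹ ^ 2 * (v ⬝ᵥ (H *ᵥ v)) :=
      quad_smul H _ v
    rw [h2] at this
    have := mul_le_mul_of_nonneg_left this (sq_nonneg ‖v‖)
    calc c * ‖v‖ ^ 2 = ‖v‖ ^ 2 * c := by ring
    _ ≤ ‖v‖ ^ 2 * (‖v‖⁻¹ ^ 2 * (v ⬝ᵥ (H *ᵥ v))) := this
    _ = v ⬝ᵥ (H *ᵥ v) := by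
        field_simp
  have hhigh : ∀ v : Fin n → ℝ, v ≠ 0 →
      (L *ᵥ v) ⬝ᵥ (H *ᵥ (L *ᵥ v)) ≤ Cg * ‖v‖ ^ 2 := by
    intro v hv
    have hnv : (0:ℝ) < ‖v‖ := norm_pos_iff.mpr hv
    have hmem : ‖v‖⁻¹ • v ∈ Metric.sphere (0 : Fin n → ℝ) 1 := by
      rw [mem_sphere_zero_iff_norm, norm_smul]
      simp [abs_of_pos (inv_pos.mpr hnv), inv_mul_cancel₀ hnv.ne']
    have := hmax hmem
    simp only [Set.mem_setOf_eq] at this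
    have h2 : (L *ᵥ (‖v‖⁻¹ • v)) ⬝ᵥ (H *ᵥ (L *ᵥ (‖v‖⁻¹ • v)))
        = ‖v‖⁻¹ ^ 2 * ((L *ᵥ v) ⬝ᵥ (H *ᵥ (L *ᵥ v))) := by
      rw [mulVec_smul]
      exact quad_smul H _ (L *ᵥ v)
    rw [h2] at this
    have := mul_le_mul_of_nonneg_left this (sq_nonneg ‖v‖)
    calc (L *ᵥ v) ⬝ᵥ (H *ᵥ (L *ᵥ v))
        = ‖v‖ ^ 2 * (‖v‖⁻¹ ^ 2 * ((L *ᵥ v) ⬝ᵥ (H *ᵥ (L *ᵥ v)))) := by field_simp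
      _ ≤ ‖v‖ ^ 2 * Cg := this
      _ = Cg * ‖v‖ ^ 2 := by ring
  refine ⟨Real.sqrt (Cg / c), ?_⟩
  rintro x ⟨v, hv1, rfl⟩
  have hv0 : v ≠ 0 := by
    intro h0
    rw [h0] at hv1
    simp [normH] at hv1
  have hq1 : v ⬝ᵥ (H *ᵥ v) = 1 := by
    have := normH_sq hH v
    rw [hv1] at this; simpa using this.symm
  have hnv2 : c * ‖v‖ ^ 2 ≤ 1 := by rw [← hq1]; exact hlow v hv0
  have hub : (L *ᵥ v) ⬝ᵥ (H *ᵥ (L *ᵥ v)) ≤ Cg / c := by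
    calc (L *ᵥ v) ⬝ᵥ (H *ᵥ (L *ᵥ v)) ≤ Cg * ‖v‖ ^ 2 := hhigh v hv0
    _ ≤ Cg / c := by
        rw [div_eq_mul_inv]
        refine mul_le_mul_of_nonneg_left ?_ hCg0
        rw [← mul_le_mul_iff_right₀ hcpos]
        calc c * ‖v‖ ^ 2 ≤ 1 := hnv2
        _ = c * c⁻¹ := (mul_inv_cancel₀ hcpos.ne').symm
  exact Real.sqrt_le_sqrt hub

lemma normH_mulVec_le {H : Matrix (Fin n) (Fin n) ℝ} (hH : H.PosDef)
    (L : Matrix (Fin n) (Fin n) ℝ) (u : Fin n → ℝ) :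
    normH H (L *ᵥ u) ≤ opNormH H L * normH H u := by
  by_cases hu : u = 0
  · simp [hu, normH]
  · have hn : 0 < n := by
      rcases Nat.eq_zero_or_pos n with h0 | h
      · subst h0; exact absurd (Subsingleton.elim u 0) hu
      · exact h
    have hbdd := bddAbove_set hH L hn
    set r := normH H u with hr
    have hrpos : 0 < r := Real.sqrt_pos.mpr (quad_pos hH hu)
    have hw : normH H (r⁻¹ • u) = 1 := by
      rw [normH_smul, abs_of_pos (inv_pos.mpr hrpos), ← hr, inv_mul_cancel₀ hrpos.ne']
    have hkey : normH H (L *ᵥ (r⁻¹ • u)) ≤ opNormH H L :=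
      le_csSup hbdd ⟨r⁻¹ • u, hw, rfl⟩
    rw [mulVec_smul, normH_smul, abs_of_pos (inv_pos.mpr hrpos)] at hkey
    calc normH H (L *ᵥ u) = r * (r⁻¹ * normH H (L *ᵥ u)) := by field_simp
    _ ≤ r * opNormH H L := by
        exact mul_le_mul_of_nonneg_left hkey hrpos.le
    _ = opNormH H L * r := by ring

lemma sum_dotProduct' {ι : Type*} (F : Finset ι) (y : ι → Fin n → ℝ) (w : Fin n → ℝ) :
    (∑ p ∈ F, y p) ⬝ᵥ w = ∑ p ∈ F, y p ⬝ᵥ w := by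
  induction F using Finset.cons_induction with
  | empty => simp
  | cons a F ha ih => simp [Finset.sum_cons, add_dotProduct, ih]

lemma dotProduct_sum' {ι : Type*} (F : Finset ι) (w : Fin n → ℝ) (y : ι → Fin n → ℝ) :
    w ⬝ᵥ (∑ p ∈ F, y p) = ∑ p ∈ F, w ⬝ᵥ y p := by
  induction F using Finset.cons_induction with
  | empty => simp
  | cons a F ha ih => simp [Finset.sum_cons, dotProduct_add, ih]

lemma mulVec_sum' {ι : Type*} (F : Finset ι) (M : Matrix (Fin n) (Fin n) ℝ)
    (y : ι → Fin n → ℝ) : M *ᵥ (∑ p ∈ F, y p) = ∑ p ∈ F, M *ᵥ y p := by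
  induction F using Finset.cons_induction with
  | empty => simp
  | cons a F ha ih => simp [Finset.sum_cons, mulVec_add, ih]

lemma sum_mulVec' {ι : Type*} (F : Finset ι) (M : ι → Matrix (Fin n) (Fin n) ℝ)
    (w : Fin n → ℝ) : (∑ p ∈ F, M p) *ᵥ w = ∑ p ∈ F, M p *ᵥ w := by
  induction F using Finset.cons_induction with
  | empty => simp
  | cons a F ha ih => simp [Finset.sum_cons, add_mulVec, ih]

lemma expand_quad (H : Matrix (Fin n) (Fin n) ℝ) (F : Finset ℕ) (f : ℕ → ℝ)
    (x : ℕ → Fin n → ℝ) :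
    (∑ p ∈ F, f p • x p) ⬝ᵥ (H *ᵥ (∑ q ∈ F, f q • x q)) =
      ∑ p ∈ F, ∑ q ∈ F, (f p * f q) * (x p ⬝ᵥ (H *ᵥ x q)) := by
  rw [mulVec_sum', sum_dotProduct']
  refine Finset.sum_congr rfl fun p _ => ?_
  rw [dotProduct_sum']
  refine Finset.sum_congr rfl fun q _ => ?_
  rw [mulVec_smul, smul_dotProduct, dotProduct_smul]
  simp [smul_smul]
  ring

end SSC

theorem strong_stability_criterion {n : ℕ}
    (H L : Matrix (Fin n) (Fin n) ℝ)
    (hH : H.PosDef) (hHsymm : H.IsSymm)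
    (hL : Lᵀ * H + H * L = 0)
    (s : ℕ) (hs : 2 ≤ s) (a : ℕ → ℝ) (h : ℝ) (hh : 0 < h) (ha0 : a 0 = 1)
    (G : Matrix (Fin n) (Fin n) ℝ)
    (hG : G = ∑ k ∈ Finset.range (s + 1), a k • (h • L) ^ k)
    (b : ℕ → ℝ)
    (hb : ∀ k, b k = ∑ i ∈ Finset.Icc (max 0 (2 * k - s)) (min (2 * k) s),
      (-1 : ℝ) ^ (k + i) * a i * a (2 * k - i))
    (hbvanish : ∀ k, 1 ≤ k → k ≤ s - 2 → b k = 0)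
    (hbs1 : b (s - 1) < 0)
    (hbs : b s = (a s) ^ 2) (has : a s ≠ 0)
    (hstep : h * opNormH H L ≤ Real.sqrt (-b (s - 1) / b s)) :
    ∀ u : Fin n → ℝ, normH H (G *ᵥ u) ≤ normH H u := by
  intro u
  -- notation
  set v : ℕ → (Fin n → ℝ) := fun p => L ^ p *ᵥ u with hv
  set c : ℕ → ℕ → ℝ := fun p q => v p ⬝ᵥ (H *ᵥ v q) with hcdef
  -- skew-adjointness
  have hLH : Lᵀ * H = -(H * L) := eq_neg_of_add_eq_zero_left hL
  have hcc : ∀ p q, c p q = (L ^ p *ᵥ u) ⬝ᵥ (H *ᵥ (L ^ q *ᵥ u)) := fun _ _ => rfl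
  have hskew : ∀ x y : Fin n → ℝ, (L *ᵥ x) ⬝ᵥ (H *ᵥ y) = -(x ⬝ᵥ (H *ᵥ (L *ᵥ y))) := by
    intro x y
    calc (L *ᵥ x) ⬝ᵥ (H *ᵥ y) = (x ᵥ* Lᵀ) ⬝ᵥ (H *ᵥ y) := by rw [vecMul_transpose]
      _ = x ⬝ᵥ (Lᵀ *ᵥ (H *ᵥ y)) := (dotProduct_mulVec _ _ _).symm
      _ = x ⬝ᵥ ((Lᵀ * H) *ᵥ y) := by rw [mulVec_mulVec]
      _ = x ⬝ᵥ ((-(H * L)) *ᵥ y) := by rw [hLH]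
      _ = -(x ⬝ᵥ ((H * L) *ᵥ y)) := by rw [neg_mulVec, dotProduct_neg]
      _ = -(x ⬝ᵥ (H *ᵥ (L *ᵥ y))) := by rw [← mulVec_mulVec]
  have hsymmdot : ∀ x y : Fin n → ℝ, x ⬝ᵥ (H *ᵥ y) = y ⬝ᵥ (H *ᵥ x) := by
    intro x y
    calc x ⬝ᵥ (H *ᵥ y) = (x ᵥ* H) ⬝ᵥ y := dotProduct_mulVec _ _ _
      _ = y ⬝ᵥ (x ᵥ* H) := dotProduct_comm _ _
      _ = y ⬝ᵥ (Hᵀ *ᵥ x) := by rw [mulVec_transpose]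
      _ = y ⬝ᵥ (H *ᵥ x) := by rw [hHsymm.eq]
  have hcsucc : ∀ p q, c (p+1) q = -(c p (q+1)) := by
    intro p q
    rw [hcc, hcc]
    rw [pow_succ' L p, ← mulVec_mulVec, hskew,
      show L *ᵥ (L ^ q *ᵥ u) = L ^ (q+1) *ᵥ u from by rw [pow_succ', ← mulVec_mulVec]]
  have hcform : ∀ p q, c p q = (-1 : ℝ)^p * c 0 (p + q) := by
    intro p
    induction p with
    | zero => intro q; simp
    | succ p ih =>
      intro q
      rw [hcsucc, ih (q+1)]
      have hq : p + (q + 1) = (p + 1) + q := by omega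
      rw [hq]
      ring
  have hcsymm : ∀ p q, c p q = c q p := fun p q => hsymmdot _ _
  have hoddzero : ∀ p q, (p + q) % 2 = 1 → c p q = 0 := by
    intro p q hpq
    have hodd : Odd (p + q) := Nat.odd_iff.mpr hpq
    have h1 : c p q = (-1 : ℝ)^p * c 0 (p+q) := hcform p q
    have h2 : c q p = (-1 : ℝ)^q * c 0 (p+q) := by rw [hcform q p, Nat.add_comm q p]
    have h3 := hcsymm p q
    have e : (-1 : ℝ)^p * c 0 (p+q) = (-1 : ℝ)^q * c 0 (p+q) := by rw [← h1, h3, h2]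
    have k1 : (-1 : ℝ)^p * (-1 : ℝ)^p = 1 := by
      rw [← pow_add]; exact Even.neg_one_pow ⟨p, rfl⟩
    have k2 : (-1 : ℝ)^p * (-1 : ℝ)^q = -1 := by
      rw [← pow_add]; exact Odd.neg_one_pow hodd
    have hX : c 0 (p+q) = 0 := by
      have e3 : c 0 (p+q) = -(c 0 (p+q)) := by
        calc c 0 (p+q) = ((-1 : ℝ)^p * (-1 : ℝ)^p) * c 0 (p+q) := by rw [k1, one_mul]
          _ = (-1 : ℝ)^p * ((-1 : ℝ)^p * c 0 (p+q)) := by ring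
          _ = (-1 : ℝ)^p * ((-1 : ℝ)^q * c 0 (p+q)) := by rw [e]
          _ = ((-1 : ℝ)^p * (-1 : ℝ)^q) * c 0 (p+q) := by ring
          _ = -(c 0 (p+q)) := by rw [k2]; ring
      linarith
    rw [h1, hX, mul_zero]
  have heven : ∀ k i, i ≤ 2*k → c i (2*k - i) = (-1 : ℝ)^(k+i) * c k k := by
    intro k i hik
    have h1 : c i (2*k - i) = (-1 : ℝ)^i * c 0 (2*k) := by
      rw [hcform]
      congr 2
      omega
    have h2 : c k k = (-1 : ℝ)^k * c 0 (2*k) := by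
      rw [hcform]
      congr 2
      omega
    have k1 : (-1 : ℝ)^k * (-1 : ℝ)^k = 1 := by
      rw [← pow_add]; exact Even.neg_one_pow ⟨k, rfl⟩
    calc c i (2*k-i) = (-1 : ℝ)^i * c 0 (2*k) := h1
      _ = (-1 : ℝ)^i * (((-1 : ℝ)^k * (-1 : ℝ)^k) * c 0 (2*k)) := by rw [k1, one_mul]
      _ = (-1 : ℝ)^(k+i) * ((-1 : ℝ)^k * c 0 (2*k)) := by rw [pow_add]; ring
      _ = (-1 : ℝ)^(k+i) * c k k := by rw [← h2]
  -- expansion of the quadratic form of G u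
  have hGu : G *ᵥ u = ∑ p ∈ Finset.range (s+1), (a p * h^p) • v p := by
    rw [hG]
    rw [SSC.sum_mulVec']
    refine Finset.sum_congr rfl fun k _ => ?_
    rw [smul_mulVec, smul_pow, smul_mulVec, smul_smul]
  have hexp : (G *ᵥ u) ⬝ᵥ (H *ᵥ (G *ᵥ u))
      = ∑ p ∈ Finset.range (s+1), ∑ q ∈ Finset.range (s+1),
          ((a p * h^p) * (a q * h^q)) * c p q := by
    rw [hGu, SSC.expand_quad]
  -- reindexing to the b-coefficients
  have hbig : (∑ p ∈ Finset.range (s+1), ∑ q ∈ Finset.range (s+1),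
        ((a p * h^p) * (a q * h^q)) * c p q)
      = ∑ k ∈ Finset.range (s+1), b k * (h^(2*k) * c k k) := by
    have hstep1 : (∑ p ∈ Finset.range (s+1), ∑ q ∈ Finset.range (s+1),
          ((a p * h^p) * (a q * h^q)) * c p q)
        = ∑ x ∈ (Finset.range (s+1)) ×ˢ (Finset.range (s+1)),
            ((a x.1 * h^x.1) * (a x.2 * h^x.2)) * c x.1 x.2 :=
      (Finset.sum_product' _ _ _).symm
    have hstep2 : (∑ x ∈ ((Finset.range (s+1)) ×ˢ (Finset.range (s+1))).filter
          (fun x => (x.1 + x.2) % 2 = 0),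
            ((a x.1 * h^x.1) * (a x.2 * h^x.2)) * c x.1 x.2)
        = ∑ x ∈ (Finset.range (s+1)) ×ˢ (Finset.range (s+1)),
            ((a x.1 * h^x.1) * (a x.2 * h^x.2)) * c x.1 x.2 := by
      refine Finset.sum_filter_of_ne ?_
      intro x hx hne
      by_contra hodd2
      have : (x.1 + x.2) % 2 = 1 := by omega
      exact hne (by rw [hoddzero x.1 x.2 this, mul_zero])
    have hstep3 : (∑ x ∈ ((Finset.range (s+1)) ×ˢ (Finset.range (s+1))).filter
          (fun x => (x.1 + x.2) % 2 = 0),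
            ((a x.1 * h^x.1) * (a x.2 * h^x.2)) * c x.1 x.2)
        = ∑ y ∈ (Finset.range (s+1)).sigma
            (fun k => Finset.Icc (max 0 (2*k - s)) (min (2*k) s)),
            ((-1 : ℝ)^(y.1 + y.2) * a y.2 * a (2*y.1 - y.2)) * (h^(2*y.1) * c y.1 y.1) := by
      refine Finset.sum_nbij' (fun x => ⟨(x.1 + x.2)/2, x.1⟩) (fun y => (y.2, 2*y.1 - y.2))
        ?_ ?_ ?_ ?_ ?_
      · rintro ⟨p, q⟩ hx
        simp only [Finset.mem_filter, Finset.mem_product, Finset.mem_range] at hx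
        simp only [Finset.mem_sigma, Finset.mem_range, Finset.mem_Icc]
        omega
      · rintro ⟨k, i⟩ hy
        simp only [Finset.mem_sigma, Finset.mem_range, Finset.mem_Icc] at hy
        simp only [Finset.mem_filter, Finset.mem_product, Finset.mem_range]
        omega
      · rintro ⟨p, q⟩ hx
        simp only [Finset.mem_filter, Finset.mem_product, Finset.mem_range] at hx
        have h1 : 2 * ((p + q)/2) - p = q := by omega
        simp [h1]
      · rintro ⟨k, i⟩ hy
        simp only [Finset.mem_sigma, Finset.mem_range, Finset.mem_Icc] at hy
        have h1 : (i + (2*k - i))/2 = k := by omega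
        simp [h1]
      · rintro ⟨p, q⟩ hx
        simp only [Finset.mem_filter, Finset.mem_product, Finset.mem_range] at hx
        set k := (p + q)/2 with hk
        have hq : q = 2*k - p := by omega
        have hpk : p ≤ 2*k := by omega
        have hpq2 : p + q = 2*k := by omega
        simp only
        have hcpq : c p q = (-1 : ℝ)^(k+p) * c k k := by
          rw [hq]
          exact heven k p hpk
        have hpow : h^p * h^q = h^(2*k) := by rw [← pow_add, hpq2]
        calc ((a p * h^p) * (a q * h^q)) * c p q
            = (a p * a q) * (h^p * h^q) * c p q := by ring
          _ = (a p * a q) * h^(2*k) * ((-1 : ℝ)^(k+p) * c k k) := by rw [hpow, hcpq]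
          _ = ((-1 : ℝ)^(k+p) * a p * a (2*k - p)) * (h^(2*k) * c k k) := by
              rw [hq]; ring
    calc (∑ p ∈ Finset.range (s+1), ∑ q ∈ Finset.range (s+1),
          ((a p * h^p) * (a q * h^q)) * c p q)
        = ∑ x ∈ (Finset.range (s+1)) ×ˢ (Finset.range (s+1)),
            ((a x.1 * h^x.1) * (a x.2 * h^x.2)) * c x.1 x.2 := hstep1
      _ = ∑ x ∈ ((Finset.range (s+1)) ×ˢ (Finset.range (s+1))).filter
            (fun x => (x.1 + x.2) % 2 = 0),
            ((a x.1 * h^x.1) * (a x.2 * h^x.2)) * c x.1 x.2 := hstep2.symm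
      _ = ∑ y ∈ (Finset.range (s+1)).sigma
            (fun k => Finset.Icc (max 0 (2*k - s)) (min (2*k) s)),
            ((-1 : ℝ)^(y.1 + y.2) * a y.2 * a (2*y.1 - y.2)) * (h^(2*y.1) * c y.1 y.1) := hstep3
      _ = ∑ k ∈ Finset.range (s+1), ∑ i ∈ Finset.Icc (max 0 (2*k - s)) (min (2*k) s),
            ((-1 : ℝ)^(k + i) * a i * a (2*k - i)) * (h^(2*k) * c k k) :=
          (Finset.sum_sigma' (Finset.range (s+1))
            (fun k => Finset.Icc (max 0 (2*k - s)) (min (2*k) s))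
            (fun k i => ((-1 : ℝ)^(k + i) * a i * a (2*k - i)) * (h^(2*k) * c k k))).symm
      _ = ∑ k ∈ Finset.range (s+1), b k * (h^(2*k) * c k k) := by
          refine Finset.sum_congr rfl fun k _ => ?_
          rw [hb k, Finset.sum_mul]
  -- split the sum
  have hb0 : b 0 = 1 := by
    rw [hb]
    norm_num [ha0]
  have hsub : ({0, s-1, s} : Finset ℕ) ⊆ Finset.range (s+1) := by
    intro x hx
    simp only [Finset.mem_insert, Finset.mem_singleton] at hx
    simp only [Finset.mem_range]
    omega
  have hzero : ∀ x ∈ Finset.range (s+1), x ∉ ({0, s-1, s} : Finset ℕ) →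
      b x * (h^(2*x) * c x x) = 0 := by
    intro x hx hnx
    simp only [Finset.mem_range] at hx
    simp only [Finset.mem_insert, Finset.mem_singleton] at hnx
    push_neg at hnx
    rw [hbvanish x (by omega) (by omega), zero_mul]
  have hsplit : ∑ k ∈ Finset.range (s+1), b k * (h^(2*k) * c k k)
      = b 0 * (h^(2*0) * c 0 0) + (b (s-1) * (h^(2*(s-1)) * c (s-1) (s-1))
        + b s * (h^(2*s) * c s s)) := by
    rw [← Finset.sum_subset hsub hzero]
    rw [Finset.sum_insert (by simp; omega), Finset.sum_insert (by simp; omega),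
      Finset.sum_singleton]
  have hc00 : c 0 0 = u ⬝ᵥ (H *ᵥ u) := by rw [hcc]; simp
  set N := opNormH H L with hNdef
  have hN0 : 0 ≤ N := SSC.opNormH_nonneg H L
  have hE1 : 0 ≤ c (s-1) (s-1) := SSC.quad_nonneg hH _
  have hE2 : 0 ≤ c s s := SSC.quad_nonneg hH _
  have hvs : v s = L *ᵥ v (s-1) := by
    show L ^ s *ᵥ u = L *ᵥ (L ^ (s-1) *ᵥ u)
    have hss : s - 1 + 1 = s := by omega
    rw [mulVec_mulVec, ← pow_succ', hss]
  have hE2N : c s s ≤ N^2 * c (s-1) (s-1) := by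
    have h1 : normH H (v s) ≤ N * normH H (v (s-1)) := by
      rw [hvs]; exact SSC.normH_mulVec_le hH L _
    calc c s s = normH H (v s)^2 := (SSC.normH_sq hH (v s)).symm
      _ ≤ (N * normH H (v (s-1)))^2 :=
          pow_le_pow_left₀ (SSC.normH_nonneg H (v s)) h1 2
      _ = N^2 * normH H (v (s-1))^2 := by ring
      _ = N^2 * c (s-1) (s-1) := by rw [SSC.normH_sq hH]
  have hbspos : 0 < b s := by rw [hbs]; positivity
  have hrhs0 : 0 ≤ -b (s-1) / b s := div_nonneg (by linarith) hbspos.le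
  have hN2 : h^2 * N^2 ≤ -b (s-1) / b s := by
    have h2 := mul_self_le_mul_self (mul_nonneg hh.le hN0) hstep
    rw [Real.mul_self_sqrt hrhs0] at h2
    calc h^2 * N^2 = (h*N)*(h*N) := by ring
      _ ≤ -b (s-1) / b s := h2
  have hE2term : b s * (h^(2*s) * c s s) ≤ -(b (s-1) * (h^(2*(s-1)) * c (s-1) (s-1))) := by
    have hps : h ^ (2*s) = h^(2*(s-1)) * h^2 := by rw [← pow_add]; congr 1; omega
    have st1 : b s * (h^(2*s) * c s s) ≤ b s * (h^(2*s) * (N^2 * c (s-1) (s-1))) := by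
      refine mul_le_mul_of_nonneg_left ?_ hbspos.le
      exact mul_le_mul_of_nonneg_left hE2N (pow_nonneg hh.le _)
    have st2 : b s * (h^(2*s) * (N^2 * c (s-1) (s-1)))
        = (h^(2*(s-1)) * c (s-1) (s-1)) * (b s * (h^2 * N^2)) := by rw [hps]; ring
    have st3 : (h^(2*(s-1)) * c (s-1) (s-1)) * (b s * (h^2 * N^2))
        ≤ (h^(2*(s-1)) * c (s-1) (s-1)) * (-b (s-1)) := by
      refine mul_le_mul_of_nonneg_left ?_ (mul_nonneg (pow_nonneg hh.le _) hE1)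
      calc b s * (h^2*N^2) ≤ b s * (-b (s-1)/b s) :=
            mul_le_mul_of_nonneg_left hN2 hbspos.le
        _ = -b (s-1) := by field_simp
    have st4 : (h^(2*(s-1)) * c (s-1) (s-1)) * (-b (s-1))
        = -(b (s-1) * (h^(2*(s-1)) * c (s-1) (s-1))) := by ring
    linarith
  have hquad : (G *ᵥ u) ⬝ᵥ (H *ᵥ (G *ᵥ u)) ≤ u ⬝ᵥ (H *ᵥ u) := by
    rw [hexp, hbig, hsplit, hb0, hc00]
    have h20 : h^(2*0) = 1 := by norm_num
    rw [h20]
    linarith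
  unfold normH
  exact Real.sqrt_le_sqrt hquad
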